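/- Let J : ℝ^d → ℝ be C¹ with ∇J globally Lipschitz with constant L. Fix θ ∈ ℝ^d, c > 0, and let Δ ∈ {−1,1}^d have i.i.d. Rademacher components. Define V = (J(θ + cΔ) − J(θ − cΔ))/(2c) and y_i = V/Δ_i = V·Δ_i. Then for each i, E[y_i] differs from [∇J(θ)]_i by at most c·d·L/2; consequently ‖E[y] − ∇J(θ)‖ ≤ c·d^{3/2}·L/2. -/

import Mathlib

open MeasureTheory ProbabilityTheory

local notation "⟪" x ", " y "⟫" => @inner ℝ _ _ x y

theorem descent' {E : Type*} [NormedAddCommGroup E] [InnerProductSpace ℝ E] [CompleteSpace E]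
    (f : E → ℝ) (L : NNReal) (hf : ContDiff ℝ 1 f) (hL : LipschitzWith L (gradient f))
    (x h : E) : |f (x + h) - f x - ⟪gradient f x, h⟫| ≤ L / 2 * ‖h‖ ^ 2 := by
  have hdiff := hf.differentiable one_ne_zero
  have hip : ∀ p : E, ⟪gradient f p, h⟫ = fderiv ℝ f p h := fun p =>
    InnerProductSpace.toDual_symm_apply
  set g' : ℝ → ℝ := fun t => ⟪gradient f (x + t • h), h⟫ with hg'
  have hline : ∀ t : ℝ, HasDerivAt (fun t : ℝ => x + t • h) h t := fun t => by
    simpa using ((hasDerivAt_id t).smul_const h).const_add x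
  have hg : ∀ t : ℝ, HasDerivAt (fun t => f (x + t • h)) (g' t) t := fun t => by
    simp only [hg']
    rw [hip]
    exact (hdiff (x + t • h)).hasFDerivAt.comp_hasDerivAt t (hline t)
  have hgradcont : Continuous (gradient f) := hL.continuous
  have hg'cont : Continuous g' := by
    apply Continuous.inner
    · exact hgradcont.comp (continuous_const.add (continuous_id.smul continuous_const))
    · exact continuous_const
  have hftc : ∫ t in (0:ℝ)..1, g' t = f (x + h) - f x := by
    have := intervalIntegral.integral_eq_sub_of_hasDerivAt (f := fun t => f (x + t • h))
      (fun t _ => hg t) (hg'cont.intervalIntegrable 0 1)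
    simpa using this
  have hconst : ∫ t in (0:ℝ)..1, ⟪gradient f x, h⟫ = ⟪gradient f x, h⟫ := by simp
  have key : f (x + h) - f x - ⟪gradient f x, h⟫
      = ∫ t in (0:ℝ)..1, (g' t - ⟪gradient f x, h⟫) := by
    rw [intervalIntegral.integral_sub (hg'cont.intervalIntegrable 0 1)
      (intervalIntegrable_const), hftc, hconst]
  rw [key]
  have hbound : ∀ᵐ t ∂(volume.restrict (Set.uIoc (0:ℝ) 1)),
      ‖g' t - ⟪gradient f x, h⟫‖ ≤ (L : ℝ) * ‖h‖ ^ 2 * t := by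
    rw [Set.uIoc_of_le zero_le_one]
    filter_upwards [ae_restrict_mem measurableSet_Ioc] with t ht
    have h1 : g' t - ⟪gradient f x, h⟫ = ⟪gradient f (x + t • h) - gradient f x, h⟫ := by
      rw [inner_sub_left]
    rw [h1, Real.norm_eq_abs]
    calc |⟪gradient f (x + t • h) - gradient f x, h⟫|
        ≤ ‖gradient f (x + t • h) - gradient f x‖ * ‖h‖ := abs_real_inner_le_norm _ _
      _ ≤ (L : ℝ) * ‖t • h‖ * ‖h‖ := by
          have := hL.dist_le_mul (x + t • h) x
          rw [dist_eq_norm] at this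
          gcongr
          simpa using this
      _ = (L : ℝ) * ‖h‖ ^ 2 * t := by
          rw [norm_smul, Real.norm_eq_abs, abs_of_pos ht.1]; ring
  have hintb : IntervalIntegrable (fun t => (L : ℝ) * ‖h‖ ^ 2 * t) volume 0 1 :=
    (continuous_const.mul continuous_id).intervalIntegrable 0 1
  have := intervalIntegral.norm_integral_le_of_norm_le (f := fun t => g' t - ⟪gradient f x, h⟫) zero_le_one
    ((ae_restrict_iff' measurableSet_Ioc).1 (by rwa [Set.uIoc_of_le zero_le_one] at hbound)) hintb
  rw [Real.norm_eq_abs] at this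
  refine this.trans ?_
  refine (le_abs_self _).trans ?_
  rw [abs_of_nonneg]
  · rw [intervalIntegral.integral_const_mul, integral_id]
    norm_num
    ring_nf
    rfl
  · apply intervalIntegral.integral_nonneg zero_le_one
    intro u hu
    have : (0:ℝ) ≤ u := hu.1
    positivity

theorem stmt7 {Ω : Type*} {m0 : MeasurableSpace Ω} (μ : Measure Ω) [IsProbabilityMeasure μ]
    {d : ℕ} (J : EuclideanSpace ℝ (Fin d) → ℝ) (L : NNReal)
    (hJ : ContDiff ℝ 1 J) (hL : LipschitzWith L (gradient J))
    (θ : EuclideanSpace ℝ (Fin d)) (c : ℝ) (hc : 0 < c)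
    (Δ : Ω → EuclideanSpace ℝ (Fin d)) (hΔmeas : Measurable Δ)
    (hsign : ∀ i, ∀ᵐ ω ∂μ, Δ ω i = 1 ∨ Δ ω i = -1)
    (hprob : ∀ i, μ {ω | Δ ω i = 1} = 1 / 2)
    (hiid : iIndepFun (fun i ω => Δ ω i) μ)
    (V : Ω → ℝ) (hV : ∀ ω, V ω = (J (θ + c • Δ ω) - J (θ - c • Δ ω)) / (2 * c))
    (y : Fin d → Ω → ℝ) (hy : ∀ i ω, y i ω = V ω * Δ ω i) :
    (∀ i, |(∫ ω, y i ω ∂μ) - gradient J θ i| ≤ c * d * L / 2) ∧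
      Real.sqrt (∑ i, ((∫ ω, y i ω ∂μ) - gradient J θ i) ^ 2)
        ≤ c * (d : ℝ) ^ ((3 : ℝ) / 2) * L / 2 := by
  set g : EuclideanSpace ℝ (Fin d) := gradient J θ with hg
  set B : ℝ := c * d * L / 2 with hB
  have hB0 : 0 ≤ B := by positivity
  have hΔi : ∀ i, Measurable fun ω => Δ ω i := fun i => (measurable_pi_apply i).comp ((WithLp.measurable_ofLp 2 _).comp hΔmeas)
  have hAE : ∀ᵐ ω ∂μ, ∀ i, Δ ω i = 1 ∨ Δ ω i = -1 := ae_all_iff.2 hsign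
  -- integrability of coordinates
  have hΔint : ∀ i, Integrable (fun ω => Δ ω i) μ := by
    intro i
    refine Integrable.mono' (integrable_const 1) (hΔi i).aestronglyMeasurable ?_
    filter_upwards [hsign i] with ω hω
    rcases hω with h | h <;> simp [h]
  have hprodint : ∀ i j, Integrable (fun ω => Δ ω i * Δ ω j) μ := by
    intro i j
    refine Integrable.mono' (integrable_const 1) ((hΔi i).mul (hΔi j)).aestronglyMeasurable ?_
    filter_upwards [hsign i, hsign j] with ω h1 h2
    rcases h1 with h1 | h1 <;> rcases h2 with h2 | h2 <;> simp [h1, h2]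
  -- mean of coordinates
  have hEΔ : ∀ i, ∫ ω, Δ ω i ∂μ = 0 := by
    intro i
    have hs : MeasurableSet {ω | Δ ω i = 1} := hΔi i (measurableSet_singleton 1)
    have hae : (fun ω => Δ ω i) =ᵐ[μ]
        fun ω => Set.indicator {ω | Δ ω i = 1} (fun _ => (2:ℝ)) ω - 1 := by
      filter_upwards [hsign i] with ω hω
      rcases hω with h | h
      · simp [Set.indicator_of_mem (show ω ∈ {ω | Δ ω i = 1} from h), h]; norm_num
      · have : ω ∉ {ω | Δ ω i = 1} := by simp [h]; norm_num
        simp [Set.indicator_of_notMem this, h]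
    rw [integral_congr_ae hae,
      integral_sub ((integrable_const (2:ℝ)).indicator hs) (integrable_const 1),
      integral_indicator_const (2:ℝ) hs, measureReal_def, hprob i]
    simp
  -- second moments
  have hEii : ∀ i, ∫ ω, Δ ω i * Δ ω i ∂μ = 1 := by
    intro i
    have hae : (fun ω => Δ ω i * Δ ω i) =ᵐ[μ] fun _ => (1:ℝ) := by
      filter_upwards [hsign i] with ω hω
      rcases hω with h | h <;> simp [h]
    rw [integral_congr_ae hae]; simp
  have hEij : ∀ i j, i ≠ j → ∫ ω, Δ ω i * Δ ω j ∂μ = 0 := by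
    intro i j hij
    have hind : IndepFun (fun ω => Δ ω i) (fun ω => Δ ω j) μ := hiid.indepFun hij
    have h := hind.integral_mul_eq_mul_integral (hΔint i).aestronglyMeasurable (hΔint j).aestronglyMeasurable
    rw [hEΔ i, hEΔ j, mul_zero] at h
    exact h
  -- the linear surrogate
  set Z : Fin d → Ω → ℝ := fun i ω => (∑ j, g j * Δ ω j) * Δ ω i with hZ
  have hZint : ∀ i, Integrable (Z i) μ := by
    intro i
    have : Z i = fun ω => ∑ j, g j * (Δ ω j * Δ ω i) := by
      funext ω; simp only [hZ, Finset.sum_mul, mul_assoc]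
    rw [this]
    exact integrable_finset_sum _ fun j _ => (hprodint j i).const_mul (g j)
  have hEZ : ∀ i, ∫ ω, Z i ω ∂μ = g i := by
    intro i
    have h1 : (fun ω => Z i ω) = fun ω => ∑ j, g j * (Δ ω j * Δ ω i) := by
      funext ω; simp only [hZ, Finset.sum_mul, mul_assoc]
    rw [h1, integral_finset_sum _ fun j _ => (hprodint j i).const_mul (g j)]
    have h2 : ∀ j, ∫ ω, g j * (Δ ω j * Δ ω i) ∂μ = g j * ∫ ω, Δ ω j * Δ ω i ∂μ :=
      fun j => integral_const_mul _ _
    simp only [h2]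
    rw [Finset.sum_eq_single i]
    · rw [hEii i, mul_one]
    · intro j _ hji
      rw [hEij j i hji, mul_zero]
    · intro hi; exact absurd (Finset.mem_univ i) hi
  -- pointwise error bound
  have hptw : ∀ i, ∀ᵐ ω ∂μ, |y i ω - Z i ω| ≤ B := by
    intro i
    filter_upwards [hAE] with ω hω
    have hnorm : ‖Δ ω‖ ^ 2 = d := by
      rw [EuclideanSpace.norm_eq, Real.sq_sqrt (by positivity)]
      have hsq : ∀ j, Δ ω j ^ 2 = 1 := by
        intro j; rcases hω j with h | h <;> simp [h]
      simp [Real.norm_eq_abs, sq_abs, hsq]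
    have hinner : ∀ u : EuclideanSpace ℝ (Fin d), ⟪g, u⟫ = ∑ j, g j * u j := by
      intro u
      rw [PiLp.inner_apply]
      simp only [RCLike.inner_apply', conj_trivial]
    have h1 := descent' J L hJ hL θ (c • Δ ω)
    have h2 := descent' J L hJ hL θ (-(c • Δ ω))
    rw [show θ + -(c • Δ ω) = θ - c • Δ ω by abel, inner_neg_right] at h2
    rw [norm_neg] at h2
    have hns : ‖c • Δ ω‖ ^ 2 = c ^ 2 * d := by
      rw [norm_smul, mul_pow, hnorm]
      simp [abs_of_pos hc]
    rw [hns] at h1 h2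
    set S : ℝ := ∑ j, g j * Δ ω j with hS
    have hgin : ⟪g, c • Δ ω⟫ = c * S := by
      rw [hinner]
      rw [hS, Finset.mul_sum]
      congr 1; funext j
      have : (c • Δ ω) j = c * Δ ω j := rfl
      rw [this]; ring
    rw [hgin] at h1 h2
    have hVS : |V ω - S| ≤ B := by
      have hcombo : |(J (θ + c • Δ ω) - J (θ - c • Δ ω)) - 2 * c * S| ≤ (L : ℝ) * c ^ 2 * d := by
        have := abs_sub (J (θ + c • Δ ω) - J θ - c * S) (J (θ - c • Δ ω) - J θ - -(c * S))
        calc |(J (θ + c • Δ ω) - J (θ - c • Δ ω)) - 2 * c * S|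
            = |(J (θ + c • Δ ω) - J θ - c * S) - (J (θ - c • Δ ω) - J θ - -(c * S))| := by
              ring_nf
          _ ≤ |J (θ + c • Δ ω) - J θ - c * S| + |J (θ - c • Δ ω) - J θ - -(c * S)| :=
              abs_sub _ _
          _ ≤ (L : ℝ) / 2 * (c ^ 2 * d) + (L : ℝ) / 2 * (c ^ 2 * d) := add_le_add h1 h2
          _ = (L : ℝ) * c ^ 2 * d := by ring
      rw [hV ω]
      rw [abs_le] at hcombo ⊢
      constructor
      · rw [div_sub' (by positivity), le_div_iff₀ (by positivity)]
        nlinarith [hcombo.1]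
      · rw [div_sub' (by positivity), div_le_iff₀ (by positivity)]
        nlinarith [hcombo.2]
    have habs : |Δ ω i| = 1 := by rcases hω i with h | h <;> simp [h]
    have : y i ω - Z i ω = (V ω - S) * Δ ω i := by
      rw [hy, hZ]; simp only [← hS]; ring_nf
    rw [this, abs_mul, habs, mul_one]
    exact hVS
  -- integrability of y i
  have hymeas : ∀ i, Measurable (y i) := by
    intro i
    have : y i = fun ω => ((J (θ + c • Δ ω) - J (θ - c • Δ ω)) / (2 * c)) * Δ ω i := by
      funext ω; rw [hy, hV]
    rw [this]
    apply Measurable.mul _ (hΔi i)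
    apply Measurable.div_const
    exact ((hJ.continuous.measurable.comp (measurable_const.add (hΔmeas.const_smul c))).sub
      (hJ.continuous.measurable.comp (measurable_const.sub (hΔmeas.const_smul c))))
  have hyint : ∀ i, Integrable (y i) μ := by
    intro i
    refine Integrable.mono' (integrable_const ((∑ j, |g j|) + B))
      (hymeas i).aestronglyMeasurable ?_
    filter_upwards [hptw i, hAE] with ω h1 h2
    have hZb : |Z i ω| ≤ ∑ j, |g j| := by
      rw [hZ]
      have habs : |Δ ω i| = 1 := by rcases h2 i with h | h <;> simp [h]
      rw [abs_mul, habs, mul_one]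
      refine (Finset.abs_sum_le_sum_abs _ _).trans ?_
      apply Finset.sum_le_sum
      intro j _
      have : |Δ ω j| = 1 := by rcases h2 j with h | h <;> simp [h]
      rw [abs_mul, this, mul_one]
    calc ‖y i ω‖ = |y i ω - Z i ω + Z i ω| := by rw [Real.norm_eq_abs]; congr 1; ring
      _ ≤ |y i ω - Z i ω| + |Z i ω| := abs_add_le _ _
      _ ≤ B + ∑ j, |g j| := add_le_add h1 hZb
      _ = (∑ j, |g j|) + B := by ring
  -- conclude part 1
  have main : ∀ i, |(∫ ω, y i ω ∂μ) - g i| ≤ B := by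
    intro i
    have hsub : (∫ ω, y i ω ∂μ) - g i = ∫ ω, (y i ω - Z i ω) ∂μ := by
      rw [integral_sub (hyint i) (hZint i), hEZ i]
    rw [hsub]
    have := norm_integral_le_of_norm_le_const (C := B) (μ := μ)
      (f := fun ω => y i ω - Z i ω) ?_
    · simpa using this
    · filter_upwards [hptw i] with ω hω
      simpa using hω
  refine ⟨fun i => main i, ?_⟩
  have hsum : ∑ i, ((∫ ω, y i ω ∂μ) - g i) ^ 2 ≤ d * B ^ 2 := by
    calc ∑ i, ((∫ ω, y i ω ∂μ) - g i) ^ 2 ≤ ∑ _i : Fin d, B ^ 2 := by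
          apply Finset.sum_le_sum
          intro i _
          have := main i
          nlinarith [abs_nonneg ((∫ ω, y i ω ∂μ) - g i), sq_abs ((∫ ω, y i ω ∂μ) - g i)]
      _ = d * B ^ 2 := by simp [mul_comm]
  calc Real.sqrt (∑ i, ((∫ ω, y i ω ∂μ) - g i) ^ 2) ≤ Real.sqrt (d * B ^ 2) :=
        Real.sqrt_le_sqrt hsum
    _ = Real.sqrt d * B := by
        rw [Real.sqrt_mul (by positivity), Real.sqrt_sq hB0]
    _ = c * (d : ℝ) ^ ((3 : ℝ) / 2) * L / 2 := by
        have : (d : ℝ) ^ ((3 : ℝ) / 2) = d * Real.sqrt d := by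
          rw [show (3:ℝ)/2 = 1 + 1/2 by norm_num,
            Real.rpow_add' (by positivity) (by norm_num), Real.rpow_one,
            ← Real.sqrt_eq_rpow]
        rw [this, hB]; ring
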